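/- arXiv:1509.08547 — 2 statements merged into one kernel-verified Lean document; each statement's English description precedes it below -/
import Mathlib

section
/- The intersection of two benzenoids is a disjoint union of finitely many benzenoids; i.e., if L_a and L_b are benzenoids, then every connected component of L_a ∩ L_b is a benzenoid. -/
/-- Hexagons of the infinite hexagonal grid, indexed by integer pairs. -/
abbrev Hexa := ℤ × ℤ

/-- Two hexagons of the grid are adjacent (share an edge). -/
def HexAdj (a b : Hexa) : Prop :=
  (b.1 - a.1, b.2 - a.2) ∈
    ({(1,0), (-1,0), (0,1), (1,1), (0,-1), (-1,-1)} : Set (ℤ × ℤ))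

/-- `a` and `b` are joined by a path of pairwise-adjacent hexagons all lying in `K`. -/
def ReachIn (K : Set Hexa) (a b : Hexa) : Prop :=
  a ∈ K ∧ b ∈ K ∧
    Relation.ReflTransGen (fun x y => HexAdj x y ∧ x ∈ K ∧ y ∈ K) a b

/-- A hexagonal system is connected if any two of its hexagons are joined inside it. -/
def IsConnectedSys (K : Set Hexa) : Prop := ∀ a ∈ K, ∀ b ∈ K, ReachIn K a b

/-- `C` is a connected component of the hexagonal system `K`. -/
def IsComponent (K C : Set Hexa) : Prop := ∃ a ∈ K, C = {b | ReachIn K a b}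

/-- A coronoid is a finite connected (nonempty) hexagonal system. -/
def IsCoronoid (K : Set Hexa) : Prop := K.Finite ∧ K.Nonempty ∧ IsConnectedSys K

/-- A benzenoid is a coronoid whose complement is connected. -/
def IsBenzenoid (K : Set Hexa) : Prop := IsCoronoid K ∧ IsConnectedSys Kᶜ

lemma hexAdj_symm : Symmetric HexAdj := by
  intro a b h
  simp only [HexAdj, Set.mem_insert_iff, Set.mem_singleton_iff, Prod.mk.injEq] at h ⊢
  omega

lemma hexAdj_right (a : Hexa) : HexAdj a (a.1 + 1, a.2) := by simp [HexAdj]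
lemma hexAdj_left (a : Hexa) : HexAdj a (a.1 - 1, a.2) := by simp [HexAdj]
lemma hexAdj_up (a : Hexa) : HexAdj a (a.1, a.2 + 1) := by simp [HexAdj]
lemma hexAdj_down (a : Hexa) : HexAdj a (a.1, a.2 - 1) := by simp [HexAdj]

lemma grid_conn (a b : Hexa) : Relation.ReflTransGen HexAdj a b := by
  obtain ⟨n, hn⟩ : ∃ n, (b.1 - a.1).natAbs + (b.2 - a.2).natAbs = n := ⟨_, rfl⟩
  induction n generalizing a with
  | zero =>
    have : a = b := Prod.ext (by omega) (by omega)
    exact this ▸ Relation.ReflTransGen.refl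
  | succ n ih =>
    rcases lt_trichotomy a.1 b.1 with h | h | h
    · exact Relation.ReflTransGen.head (hexAdj_right a) (ih (a.1 + 1, a.2) (by simp; omega))
    · rcases lt_trichotomy a.2 b.2 with h2 | h2 | h2
      · exact Relation.ReflTransGen.head (hexAdj_up a) (ih (a.1, a.2 + 1) (by simp; omega))
      · omega
      · exact Relation.ReflTransGen.head (hexAdj_down a) (ih (a.1, a.2 - 1) (by simp; omega))
    · exact Relation.ReflTransGen.head (hexAdj_left a) (ih (a.1 - 1, a.2) (by simp; omega))

lemma reachIn_symm {K : Set Hexa} {a b : Hexa} (h : ReachIn K a b) : ReachIn K b a := by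
  refine ⟨h.2.1, h.1, ?_⟩
  have hs : Symmetric (fun x y : Hexa => HexAdj x y ∧ x ∈ K ∧ y ∈ K) :=
    fun x y ⟨h1, h2, h3⟩ => ⟨hexAdj_symm h1, h3, h2⟩
  haveI : Std.Symm (fun x y : Hexa => HexAdj x y ∧ x ∈ K ∧ y ∈ K) := ⟨fun x y h => hs h⟩
  exact Std.Symm.symm (r := Relation.ReflTransGen _) _ _ h.2.2

lemma reachIn_trans {K : Set Hexa} {a b c : Hexa} (h1 : ReachIn K a b) (h2 : ReachIn K b c) :
    ReachIn K a c := ⟨h1.1, h2.2.1, h1.2.2.trans h2.2.2⟩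

lemma reachIn_mono {K K' : Set Hexa} (hKK : K ⊆ K') {a b : Hexa} (h : ReachIn K a b) :
    ReachIn K' a b :=
  ⟨hKK h.1, hKK h.2.1,
    Relation.ReflTransGen.mono (fun _ _ ⟨h1, h2, h3⟩ => ⟨h1, hKK h2, hKK h3⟩) _ _ h.2.2⟩

lemma reachIn_refl {K : Set Hexa} {a : Hexa} (h : a ∈ K) : ReachIn K a a :=
  ⟨h, h, Relation.ReflTransGen.refl⟩

lemma reachIn_tail {K : Set Hexa} {a b c : Hexa} (h : ReachIn K a b) (hadj : HexAdj b c)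
    (hc : c ∈ K) : ReachIn K a c :=
  ⟨h.1, hc, h.2.2.tail ⟨hadj, h.2.1, hc⟩⟩

/-- A path inside `K` starting at a point reachable from `a` stays in the component of `a`,
and yields a path inside the component. -/
lemma reach_in_component {K : Set Hexa} {a x y : Hexa} (hax : ReachIn K a x)
    (hxy : Relation.ReflTransGen (fun p q => HexAdj p q ∧ p ∈ K ∧ q ∈ K) x y) :
    ReachIn K a y ∧
      Relation.ReflTransGen
        (fun p q => HexAdj p q ∧ p ∈ {b | ReachIn K a b} ∧ q ∈ {b | ReachIn K a b}) x y := by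
  induction hxy with
  | refl => exact ⟨hax, Relation.ReflTransGen.refl⟩
  | tail hbc hstep ih =>
    obtain ⟨hab, hpath⟩ := ih
    have hac : ReachIn K a _ := reachIn_tail hab hstep.1 hstep.2.2
    exact ⟨hac, hpath.tail ⟨hstep.1, hab, hac⟩⟩

/-- A nonempty finite set of hexagons has a boundary point: a member adjacent to a non-member. -/
lemma exists_boundary {S : Set Hexa} (hfin : S.Finite) {x : Hexa} (hx : x ∈ S) :
    ∃ y ∈ S, ∃ z, HexAdj y z ∧ z ∉ S := by
  by_contra hcon
  push_neg at hcon
  have hall : ∀ b, b ∈ S := by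
    intro b
    have hpath := grid_conn x b
    induction hpath with
    | refl => exact hx
    | tail _ hstep ih => exact hcon _ ih _ hstep
  exact (Set.infinite_univ (α := Hexa)) (hfin.subset (fun b _ => hall b))

/-- the intersection of two benzenoids is a disjoint union of finitely many
benzenoids: it has finitely many connected components, each of which is a benzenoid. -/
theorem stmt11 (La Lb : Set Hexa) (ha : IsBenzenoid La) (hb : IsBenzenoid Lb) :
    {C | IsComponent (La ∩ Lb) C}.Finite ∧
    (∀ C, IsComponent (La ∩ Lb) C → IsBenzenoid C) := by
  obtain ⟨⟨haf, hane, hacon⟩, hacomp⟩ := ha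
  obtain ⟨⟨hbf, hbne, hbcon⟩, hbcomp⟩ := hb
  have hKf : (La ∩ Lb).Finite := haf.subset Set.inter_subset_left
  constructor
  · have hsub : {C | IsComponent (La ∩ Lb) C} ⊆
        (fun a => {b | ReachIn (La ∩ Lb) a b}) '' (La ∩ Lb) := by
      rintro C ⟨a, haK, rfl⟩
      exact ⟨a, haK, rfl⟩
    exact (hKf.image _).subset hsub
  · rintro C ⟨a, haK, rfl⟩
    set K := La ∩ Lb with hKdef
    set C := {b | ReachIn K a b} with hCdef
    have hCK : C ⊆ K := fun b hb => hb.2.1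
    -- a point outside both benzenoids
    obtain ⟨p, hp⟩ := ((haf.union hbf).infinite_compl).nonempty
    have hpA : p ∉ La := fun h => hp (Or.inl h)
    have hpB : p ∉ Lb := fun h => hp (Or.inr h)
    -- any point not in La (resp. Lb) reaches p inside Cᶜ
    have hLaC : Laᶜ ⊆ Cᶜ := Set.compl_subset_compl.mpr
      (hCK.trans Set.inter_subset_left)
    have hLbC : Lbᶜ ⊆ Cᶜ := Set.compl_subset_compl.mpr
      (hCK.trans Set.inter_subset_right)
    have houtside : ∀ u, u ∉ K → ReachIn Cᶜ u p := by
      intro u hu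
      have hu' : u ∉ La ∨ u ∉ Lb := by
        by_contra hcc
        push_neg at hcc
        exact hu ⟨hcc.1, hcc.2⟩
      rcases hu' with h | h
      · exact reachIn_mono hLaC (hacomp u h p hpA)
      · exact reachIn_mono hLbC (hbcomp u h p hpB)
    refine ⟨⟨hKf.subset hCK, ⟨a, reachIn_refl haK⟩, ?_⟩, ?_⟩
    · -- C is connected
      intro x hx y hy
      have hxy : ReachIn K x y := reachIn_trans (reachIn_symm hx) hy
      exact ⟨hx, hy, (reach_in_component hx hxy.2.2).2⟩
    · -- Cᶜ is connected: every point of Cᶜ reaches p inside Cᶜ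
      have key : ∀ u ∈ Cᶜ, ReachIn Cᶜ u p := by
        intro u hu
        by_cases huK : u ∈ K
        · -- u is in another component C' of K
          have hC'fin : {b | ReachIn K u b}.Finite :=
            hKf.subset (fun b hb => hb.2.1)
          obtain ⟨y, hy, z, hyz, hz⟩ := exists_boundary hC'fin (reachIn_refl huK)
          have hzK : z ∉ K := fun hzK => hz (reachIn_tail hy hyz hzK)
          have hC'C : {b | ReachIn K u b} ⊆ Cᶜ := by
            intro w hw hwC
            exact hu (reachIn_trans hwC (reachIn_symm hw))
          -- path u → y inside C', lifted into Cᶜ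
          have hpath := (reach_in_component (reachIn_refl huK) hy.2.2).2
          have huy : ReachIn Cᶜ u y := reachIn_mono hC'C ⟨reachIn_refl huK, hy, hpath⟩
          have hzC : z ∈ Cᶜ := fun hzC => hzK (hCK hzC)
          exact reachIn_trans (reachIn_tail huy hyz hzC) (houtside z hzK)
        · exact houtside u huK
      intro u hu v hv
      exact reachIn_trans (key u hu) (reachIn_symm (key v hv))
end

section
/- For every coronoid K there exists, up to symmetry of the hexagonal grid, exactly one non-degenerate coronoid N with G(N) = G(K); moreover N is obtained from K by adding exactly the degenerate (single-hexagon) corona holes of K. -/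
/-- The infinite hexagonal lattice (1-skeleton of the hexagonal tiling), in "brick wall"
coordinates: all horizontal edges, and vertical edges `(x,y)-(x,y+1)` when `x+y` is even. -/
def HexLattice : SimpleGraph (ℤ × ℤ) :=
  SimpleGraph.fromRel (fun u v =>
    (u.2 = v.2 ∧ v.1 = u.1 + 1) ∨
    (u.1 = v.1 ∧ v.2 = u.2 + 1 ∧ (u.1 + u.2) % 2 = 0))

/-- The six boundary vertices of the hexagon `h`; the hexagon `(i, y)` has bottom-left
lattice vertex `(2*i - y, y)`, which makes hexagons `h`, `k` share an edge iff `HexAdj h k`. -/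
def hexVerts (h : ℤ × ℤ) : Set (ℤ × ℤ) :=
  {(2*h.1 - h.2, h.2), (2*h.1 - h.2 + 1, h.2), (2*h.1 - h.2 + 2, h.2),
   (2*h.1 - h.2, h.2 + 1), (2*h.1 - h.2 + 1, h.2 + 1), (2*h.1 - h.2 + 2, h.2 + 1)}

/-- The six boundary edges of the hexagon `h`, as a relation on lattice vertices. -/
def boundaryRel (h : ℤ × ℤ) (u v : ℤ × ℤ) : Prop :=
  (u, v) ∈ ({((2*h.1 - h.2, h.2), (2*h.1 - h.2 + 1, h.2)),
             ((2*h.1 - h.2 + 1, h.2), (2*h.1 - h.2 + 2, h.2)),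
             ((2*h.1 - h.2, h.2 + 1), (2*h.1 - h.2 + 1, h.2 + 1)),
             ((2*h.1 - h.2 + 1, h.2 + 1), (2*h.1 - h.2 + 2, h.2 + 1)),
             ((2*h.1 - h.2, h.2), (2*h.1 - h.2, h.2 + 1)),
             ((2*h.1 - h.2 + 2, h.2), (2*h.1 - h.2 + 2, h.2 + 1))}
      : Set ((ℤ × ℤ) × (ℤ × ℤ)))

/-- The boundary 6-cycle `∂h` of a hexagon, as a graph. -/
def hexBoundary (h : ℤ × ℤ) : SimpleGraph (ℤ × ℤ) :=
  SimpleGraph.fromRel (boundaryRel h)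

/-- The skeleton `G(K)`: all vertices and edges incident with a hexagon of `K`. -/
def skeleton (K : Set Hexa) : SimpleGraph (ℤ × ℤ) :=
  SimpleGraph.fromRel (fun u v => ∃ h ∈ K, boundaryRel h u v)

/-- The vertex set of the skeleton of `K`. -/
def skelVerts (K : Set Hexa) : Set (ℤ × ℤ) := ⋃ h ∈ K, hexVerts h

/-- The border `∂K`: edges incident with exactly one hexagon of `K` (boundary edges),
together with their endpoints (boundary vertices). -/
def border (K : Set Hexa) : SimpleGraph (ℤ × ℤ) :=
  SimpleGraph.fromRel (fun u v => ∃! h, h ∈ K ∧ (hexBoundary h).Adj u v)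

/-- A coronoid is non-degenerate if no component of its complement is a single hexagon. -/
def NonDegenerate (K : Set Hexa) : Prop :=
  ∀ C, IsComponent Kᶜ C → ∀ h : Hexa, C ≠ {h}

/-- The degenerate corona holes of `K`: hexagons outside `K` all of whose neighbours
are in `K`. -/
def DegHoles (K : Set Hexa) : Set Hexa :=
  {h | h ∉ K ∧ ∀ b, HexAdj h b → b ∈ K}


lemma hexAdj_iff (a b : Hexa) : HexAdj a b ↔
    (b.1 = a.1 + 1 ∧ b.2 = a.2) ∨ (b.1 = a.1 - 1 ∧ b.2 = a.2) ∨
    (b.1 = a.1 ∧ b.2 = a.2 + 1) ∨ (b.1 = a.1 + 1 ∧ b.2 = a.2 + 1) ∨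
    (b.1 = a.1 ∧ b.2 = a.2 - 1) ∨ (b.1 = a.1 - 1 ∧ b.2 = a.2 - 1) := by
  simp only [HexAdj, Set.mem_insert_iff, Set.mem_singleton_iff, Prod.mk.injEq]
  omega

lemma hexAdj_symm_s16 {a b : Hexa} (h : HexAdj a b) : HexAdj b a := by
  rw [hexAdj_iff] at h ⊢; omega

lemma hexAdj_irrefl (a : Hexa) : ¬ HexAdj a a := by
  rw [hexAdj_iff]; omega

lemma boundaryRel_iff (h u v : Hexa) : boundaryRel h u v ↔
    (u.1 = 2*h.1 - h.2 ∧ u.2 = h.2 ∧ v.1 = 2*h.1 - h.2 + 1 ∧ v.2 = h.2) ∨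
    (u.1 = 2*h.1 - h.2 + 1 ∧ u.2 = h.2 ∧ v.1 = 2*h.1 - h.2 + 2 ∧ v.2 = h.2) ∨
    (u.1 = 2*h.1 - h.2 ∧ u.2 = h.2 + 1 ∧ v.1 = 2*h.1 - h.2 + 1 ∧ v.2 = h.2 + 1) ∨
    (u.1 = 2*h.1 - h.2 + 1 ∧ u.2 = h.2 + 1 ∧ v.1 = 2*h.1 - h.2 + 2 ∧ v.2 = h.2 + 1) ∨
    (u.1 = 2*h.1 - h.2 ∧ u.2 = h.2 ∧ v.1 = 2*h.1 - h.2 ∧ v.2 = h.2 + 1) ∨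
    (u.1 = 2*h.1 - h.2 + 2 ∧ u.2 = h.2 ∧ v.1 = 2*h.1 - h.2 + 2 ∧ v.2 = h.2 + 1) := by
  simp only [boundaryRel, Set.mem_insert_iff, Set.mem_singleton_iff, Prod.mk.injEq,
    Prod.ext_iff]
  constructor
  · rintro (h|h|h|h|h|h) <;> simp_all
  · rintro (h|h|h|h|h|h) <;>
      [skip; (right); (right;right); (right;right;right); (right;right;right;right);
       (right;right;right;right;right)] <;>
      first
        | (left; exact ⟨⟨h.1,h.2.1⟩,h.2.2.1,h.2.2.2⟩)
        | exact ⟨⟨h.1,h.2.1⟩,h.2.2.1,h.2.2.2⟩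

lemma bR_ne {g u v : Hexa} (hb : boundaryRel g u v) : u ≠ v := by
  rw [boundaryRel_iff] at hb
  intro he; rw [Prod.ext_iff] at he; omega

/-- Every boundary edge of a hexagon is also a boundary edge of an adjacent hexagon,
with the same orientation. -/
lemma shared {g u v : Hexa} (hb : boundaryRel g u v) :
    ∃ g', HexAdj g g' ∧ boundaryRel g' u v := by
  rw [boundaryRel_iff] at hb
  rcases hb with h|h|h|h|h|h
  · exact ⟨(g.1 - 1, g.2 - 1), by rw [hexAdj_iff]; simp, by rw [boundaryRel_iff]; simp only [Prod.fst, Prod.snd]; omega⟩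
  · exact ⟨(g.1, g.2 - 1), by rw [hexAdj_iff]; simp, by rw [boundaryRel_iff]; simp only [Prod.fst, Prod.snd]; omega⟩
  · exact ⟨(g.1, g.2 + 1), by rw [hexAdj_iff]; simp, by rw [boundaryRel_iff]; simp only [Prod.fst, Prod.snd]; omega⟩
  · exact ⟨(g.1 + 1, g.2 + 1), by rw [hexAdj_iff]; simp, by rw [boundaryRel_iff]; simp only [Prod.fst, Prod.snd]; omega⟩
  · exact ⟨(g.1 - 1, g.2), by rw [hexAdj_iff]; simp, by rw [boundaryRel_iff]; simp only [Prod.fst, Prod.snd]; omega⟩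
  · exact ⟨(g.1 + 1, g.2), by rw [hexAdj_iff]; simp, by rw [boundaryRel_iff]; simp only [Prod.fst, Prod.snd]; omega⟩

/-- Adjacent hexagons share an edge, and they are the only two hexagons carrying it. -/
lemma sharedEdge {h b : Hexa} (hadj : HexAdj h b) :
    ∃ u v, boundaryRel h u v ∧
      ∀ g, (boundaryRel g u v ∨ boundaryRel g v u) → g = h ∨ g = b := by
  rw [hexAdj_iff] at hadj
  rcases hadj with hd|hd|hd|hd|hd|hd
  · refine ⟨(2*h.1 - h.2 + 2, h.2), (2*h.1 - h.2 + 2, h.2 + 1),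
      by rw [boundaryRel_iff]; simp, fun g hg => ?_⟩
    rcases hg with hg | hg <;> rw [boundaryRel_iff] at hg <;>
      simp only [Prod.fst, Prod.snd] at hg <;> rw [Prod.ext_iff, Prod.ext_iff] <;> omega
  · refine ⟨(2*h.1 - h.2, h.2), (2*h.1 - h.2, h.2 + 1),
      by rw [boundaryRel_iff]; simp, fun g hg => ?_⟩
    rcases hg with hg | hg <;> rw [boundaryRel_iff] at hg <;>
      simp only [Prod.fst, Prod.snd] at hg <;> rw [Prod.ext_iff, Prod.ext_iff] <;> omega
  · refine ⟨(2*h.1 - h.2, h.2 + 1), (2*h.1 - h.2 + 1, h.2 + 1),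
      by rw [boundaryRel_iff]; simp, fun g hg => ?_⟩
    rcases hg with hg | hg <;> rw [boundaryRel_iff] at hg <;>
      simp only [Prod.fst, Prod.snd] at hg <;> rw [Prod.ext_iff, Prod.ext_iff] <;> omega
  · refine ⟨(2*h.1 - h.2 + 1, h.2 + 1), (2*h.1 - h.2 + 2, h.2 + 1),
      by rw [boundaryRel_iff]; simp, fun g hg => ?_⟩
    rcases hg with hg | hg <;> rw [boundaryRel_iff] at hg <;>
      simp only [Prod.fst, Prod.snd] at hg <;> rw [Prod.ext_iff, Prod.ext_iff] <;> omega
  · refine ⟨(2*h.1 - h.2 + 1, h.2), (2*h.1 - h.2 + 2, h.2),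
      by rw [boundaryRel_iff]; simp, fun g hg => ?_⟩
    rcases hg with hg | hg <;> rw [boundaryRel_iff] at hg <;>
      simp only [Prod.fst, Prod.snd] at hg <;> rw [Prod.ext_iff, Prod.ext_iff] <;> omega
  · refine ⟨(2*h.1 - h.2, h.2), (2*h.1 - h.2 + 1, h.2),
      by rw [boundaryRel_iff]; simp, fun g hg => ?_⟩
    rcases hg with hg | hg <;> rw [boundaryRel_iff] at hg <;>
      simp only [Prod.fst, Prod.snd] at hg <;> rw [Prod.ext_iff, Prod.ext_iff] <;> omega

lemma skeleton_adj (S : Set Hexa) (u v : Hexa) : (skeleton S).Adj u v ↔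
    u ≠ v ∧ ((∃ h ∈ S, boundaryRel h u v) ∨ ∃ h ∈ S, boundaryRel h v u) := by
  simp [skeleton, SimpleGraph.fromRel_adj]

lemma skeleton_adj_of_mem {S : Set Hexa} {h u v : Hexa} (hh : h ∈ S)
    (hb : boundaryRel h u v) : (skeleton S).Adj u v := by
  rw [skeleton_adj]
  exact ⟨bR_ne hb, Or.inl ⟨h, hh, hb⟩⟩

/-- Characterization: all six edges of `h` lie in the skeleton of `S` iff `h ∈ S` or
`h` is a degenerate hole of `S`. -/
lemma full_iff (S : Set Hexa) (h : Hexa) :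
    h ∈ S ∪ DegHoles S ↔ ∀ u v, boundaryRel h u v → (skeleton S).Adj u v := by
  constructor
  · rintro (hS | ⟨hS, hall⟩) u v hb
    · exact skeleton_adj_of_mem hS hb
    · obtain ⟨g', hadj, hb'⟩ := shared hb
      exact skeleton_adj_of_mem (hall g' hadj) hb'
  · intro hall
    by_cases hS : h ∈ S
    · exact Or.inl hS
    · refine Or.inr ⟨hS, fun b hadj => ?_⟩
      obtain ⟨u, v, hb, huniq⟩ := sharedEdge hadj
      have := hall u v hb
      rw [skeleton_adj] at this
      obtain ⟨-, (⟨g, hg, hgb⟩ | ⟨g, hg, hgb⟩)⟩ := this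
      · rcases huniq g (Or.inl hgb) with rfl | rfl
        · exact absurd hg hS
        · exact hg
      · rcases huniq g (Or.inr hgb) with rfl | rfl
        · exact absurd hg hS
        · exact hg

lemma degHoles_empty {N : Set Hexa} (hnd : NonDegenerate N) : DegHoles N = ∅ := by
  ext h
  simp only [Set.mem_empty_iff_false, iff_false]
  rintro ⟨hN, hall⟩
  refine hnd {b | ReachIn Nᶜ h b} ⟨h, hN, rfl⟩ h ?_
  ext b
  simp only [Set.mem_setOf_eq, Set.mem_singleton_iff]
  constructor
  · rintro ⟨-, hbN, hchain⟩
    rcases hchain.cases_head with heq | ⟨c, ⟨hadj, -, hcN⟩, -⟩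
    · exact heq.symm
    · exact absurd (hall c hadj) hcN
  · rintro rfl
    exact ⟨hN, hN, Relation.ReflTransGen.refl⟩

lemma skeleton_union (K : Set Hexa) : skeleton (K ∪ DegHoles K) = skeleton K := by
  have main : ∀ u v : Hexa, (∃ h ∈ K ∪ DegHoles K, boundaryRel h u v) ↔
      ∃ h ∈ K, boundaryRel h u v := by
    intro u v
    constructor
    · rintro ⟨h, (hh | ⟨-, hall⟩), hb⟩
      · exact ⟨h, hh, hb⟩
      · obtain ⟨g', hadj, hb'⟩ := shared hb
        exact ⟨g', hall g' hadj, hb'⟩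
    · rintro ⟨h, hh, hb⟩
      exact ⟨h, Or.inl hh, hb⟩
  ext u v
  simp only [skeleton, SimpleGraph.fromRel_adj, main]

lemma coronoid_union (K : Set Hexa) (hK : IsCoronoid K) : IsCoronoid (K ∪ DegHoles K) := by
  obtain ⟨hfin, hne, hconn⟩ := hK
  have hDfin : (DegHoles K).Finite := by
    refine (hfin.image (fun k => (k.1 - 1, k.2))).subset ?_
    rintro h ⟨-, hall⟩
    have hb : HexAdj h (h.1 + 1, h.2) := by rw [hexAdj_iff]; simp
    exact ⟨(h.1 + 1, h.2), hall _ hb, by simp⟩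
  have hstep : ∀ a ∈ K ∪ DegHoles K, ∃ a' ∈ K,
      Relation.ReflTransGen (fun x y => HexAdj x y ∧ x ∈ K ∪ DegHoles K ∧
        y ∈ K ∪ DegHoles K) a a' := by
    rintro a (ha | ha)
    · exact ⟨a, ha, Relation.ReflTransGen.refl⟩
    · have hb : HexAdj a (a.1 + 1, a.2) := by rw [hexAdj_iff]; simp
      exact ⟨(a.1 + 1, a.2), ha.2 _ hb,
        Relation.ReflTransGen.single ⟨hb, Or.inr ha, Or.inl (ha.2 _ hb)⟩⟩
  refine ⟨hfin.union hDfin, hne.mono Set.subset_union_left, fun a ha b hb => ?_⟩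
  obtain ⟨a', ha', hca⟩ := hstep a ha
  obtain ⟨b', hb', hcb⟩ := hstep b hb
  obtain ⟨-, -, hc⟩ := hconn a' ha' b' hb'
  have hsym : Symmetric (fun x y : Hexa => HexAdj x y ∧ x ∈ K ∪ DegHoles K ∧
      y ∈ K ∪ DegHoles K) := fun x y ⟨h1, h2, h3⟩ => ⟨hexAdj_symm_s16 h1, h3, h2⟩
  exact ⟨ha, hb, hca.trans (((Relation.ReflTransGen.mono (r := fun x y : Hexa => HexAdj x y ∧ x ∈ K ∧ y ∈ K) (p := fun x y : Hexa => HexAdj x y ∧ x ∈ K ∪ DegHoles K ∧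
        y ∈ K ∪ DegHoles K) (fun x y hxy => ⟨hxy.1, Or.inl hxy.2.1, Or.inl hxy.2.2⟩) a' b' hc)).trans
    (@Std.Symm.symm _ _ (@Relation.ReflTransGen.stdSymm _ _ ⟨fun _ _ h => hsym h⟩) _ _ hcb))⟩

lemma nondeg_union (K : Set Hexa) : NonDegenerate (K ∪ DegHoles K) := by
  rintro C ⟨a, haC, rfl⟩ h hEq
  have hh : ReachIn (K ∪ DegHoles K)ᶜ a h := by
    have : h ∈ ({h} : Set Hexa) := rfl
    rw [← hEq] at this
    exact this
  obtain ⟨haU, hhU, hchain⟩ := hh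
  have hnbr : ∀ b, HexAdj h b → b ∈ K ∪ DegHoles K := by
    intro b hadj
    by_contra hb
    have hbC : b ∈ {b | ReachIn (K ∪ DegHoles K)ᶜ a b} :=
      ⟨haU, hb, hchain.trans (Relation.ReflTransGen.single ⟨hadj, hhU, hb⟩)⟩
    rw [hEq] at hbC
    exact hexAdj_irrefl h (hbC ▸ hadj)
  have hK' : ∀ b, HexAdj h b → b ∈ K := by
    intro b hadj
    rcases hnbr b hadj with hb | hb
    · exact hb
    · exact absurd (hb.2 h (hexAdj_symm_s16 hadj)) (fun hKh => hhU (Or.inl hKh))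
  exact hhU (Or.inr ⟨fun hKh => hhU (Or.inl hKh), hK'⟩)

/-- for every coronoid `K` there is exactly one non-degenerate coronoid `N`
with the same skeleton; it is obtained from `K` by adding exactly the degenerate
(single-hexagon) corona holes. -/
theorem stmt16 (K : Set Hexa) (hK : IsCoronoid K) :
    (∃! N : Set Hexa, IsCoronoid N ∧ NonDegenerate N ∧ skeleton N = skeleton K) ∧
    (IsCoronoid (K ∪ DegHoles K) ∧ NonDegenerate (K ∪ DegHoles K) ∧
      skeleton (K ∪ DegHoles K) = skeleton K) := by
  have hprops : IsCoronoid (K ∪ DegHoles K) ∧ NonDegenerate (K ∪ DegHoles K) ∧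
      skeleton (K ∪ DegHoles K) = skeleton K :=
    ⟨coronoid_union K hK, nondeg_union K, skeleton_union K⟩
  refine ⟨⟨K ∪ DegHoles K, hprops, ?_⟩, hprops⟩
  rintro N ⟨hN, hnd, hsk⟩
  have hDN : DegHoles N = ∅ := degHoles_empty hnd
  ext h
  have h1 : h ∈ N ↔ h ∈ N ∪ DegHoles N := by simp [hDN]
  rw [h1, full_iff, hsk, ← full_iff]
end
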